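/- Let A^1, ..., A^p be symmetric real p×p matrices and define θ(x) = Σ_{k=1}^p A^k x_k. If xᵀ θ(x) = 0 for all x ∈ ℝ^p, then A^k = 0 for all k (hence θ ≡ 0). -/

import Mathlib

open Matrix

/-- If `A¹,…,Aᵖ` are symmetric real `p×p` matrices and `θ(x) = ∑ₖ Aᵏ xₖ` satisfies
`xᵀ θ(x) = 0` for all `x`, then all `Aᵏ` vanish. -/
theorem stmt0 (p : ℕ) (A : Fin p → Matrix (Fin p) (Fin p) ℝ)
    (hsymm : ∀ k, (A k).IsSymm)
    (h : ∀ x : Fin p → ℝ, Matrix.vecMul x (∑ k, x k • A k) = 0) :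
    ∀ k, A k = 0 := by
  have hs : ∀ k i j, A k i j = A k j i := by
    intro k i j
    conv_lhs => rw [← hsymm k]
    rfl
  have key : ∀ i k j, A k i j + A i k j = 0 := by
    intro i k j
    rcases eq_or_ne i k with rfl | hik
    · have h1 := congrFun (h (Pi.single i 1)) j
      simp [Matrix.vecMul, dotProduct, Matrix.sum_apply, Pi.single_apply,
        ite_mul, mul_ite, Finset.sum_ite_eq'] at h1
      simp only [apply_ite (fun M : Matrix (Fin p) (Fin p) ℝ => M i j),
        Matrix.zero_apply, Finset.sum_ite_eq'] at h1
      simp at h1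
      linarith
    · have h1 := congrFun (h (Pi.single i 1)) j
      have h2 := congrFun (h (Pi.single k 1)) j
      have h3 := congrFun (h (Pi.single i 1 + Pi.single k 1)) j
      simp [Matrix.vecMul, dotProduct, Matrix.sum_apply, Pi.single_apply,
        add_mul, mul_add, ite_mul, mul_ite, Finset.sum_add_distrib,
        Finset.sum_ite_eq', ite_apply, Matrix.zero_apply, hik, hik.symm] at h1 h2 h3
      simp only [apply_ite (fun M : Matrix (Fin p) (Fin p) ℝ => M i j),
        apply_ite (fun M : Matrix (Fin p) (Fin p) ℝ => M k j),
        Matrix.zero_apply, Finset.sum_ite_eq'] at h1 h2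
      simp at h1 h2
      linarith
  intro k
  ext i j
  have e1 := key i k j
  have e2 := key j i k
  have e3 := key k j i
  have s1 := hs i k j
  have s2 := hs j i k
  have s3 := hs k i j
  simp only [Matrix.zero_apply]
  linarith
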